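/- Let ≼ be a linear order on a vertex set, and suppose edges are partitioned into parts in which no two edges are nested. Fix ℓ ≥ 0, and for each edge vw with v ≺ w that corresponds to a path v = x_0, x_1, ..., x_{ℓ+1} = w, record the sign vector f(vw) = (sign(x_0,x_1), ..., sign(x_ℓ,x_{ℓ+1})) (where sign(a,b) = +1 if a ≺ b, else −1) and the queue vector q(vw) listing the queues of the path edges. Then any two vertex-disjoint such edges vw and pq with f(vw) = f(pq) and q(vw) = q(pq) are not nested with respect to ≼ restricted to their endpoints. -/
import Mathlib


/-- Edges `vw` and `xy` in the same queue must not be nested: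
`pos v < pos x < pos y < pos w` is forbidden whenever both pairs are edges
assigned the same queue. -/
def NoNestedPair {V : Type} (G : SimpleGraph V) (pos : V → ℕ) (q : Sym2 V → ℕ) : Prop :=
  ∀ v w x y : V, G.Adj v w → G.Adj x y → q s(v, w) = q s(x, y) →
    ¬ (pos v < pos x ∧ pos x < pos y ∧ pos y < pos w)

/-- `G` has a `k`-queue layout: an injective vertex ordering `pos : V → ℕ` and an
assignment of each edge to one of `k` queues such that no two edges in the same
queue are nested. -/
def HasQueueLayout {V : Type} (G : SimpleGraph V) (k : ℕ) : Prop :=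
  ∃ (pos : V → ℕ) (q : Sym2 V → ℕ), Function.Injective pos ∧
    (∀ e ∈ G.edgeSet, q e < k) ∧ NoNestedPair G pos q

/-- Let `pos, q` be a queue layout of `G'` (no two edges in the same queue are
nested).  Suppose edges `vw` and `pq` of `G` (with `v ≺ w` and `p ≺ q`) correspond
to vertex-disjoint paths `x 0, …, x (ℓ+1)` and `y 0, …, y (ℓ+1)` in `G'`, whose
corresponding path edges have the same orientation sign vector and the same queue
vector.  Then `vw` and `pq` are not nested in `pos` restricted to their endpoints. -/

lemma key_step {V : Type} (G : SimpleGraph V) (pos : V → ℕ)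
    (hpos : Function.Injective pos)
    (q : Sym2 V → ℕ) (hnest : NoNestedPair G pos q)
    (ℓ : ℕ) (x y : ℕ → V)
    (hxadj : ∀ i ≤ ℓ, G.Adj (x i) (x (i + 1)))
    (hyadj : ∀ i ≤ ℓ, G.Adj (y i) (y (i + 1)))
    (hdisj : ∀ i ≤ ℓ + 1, ∀ j ≤ ℓ + 1, x i ≠ y j)
    (hsign : ∀ i ≤ ℓ, (pos (x i) < pos (x (i + 1)) ↔ pos (y i) < pos (y (i + 1))))
    (hqvec : ∀ i ≤ ℓ, q s(x i, x (i + 1)) = q s(y i, y (i + 1)))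
    (h0 : pos (x 0) < pos (y 0)) :
    ∀ i ≤ ℓ + 1, pos (x i) < pos (y i) := by
  intro i hi
  induction i with
  | zero => exact h0
  | succ n ih =>
    have hn : n ≤ ℓ := Nat.lt_succ_iff.mp hi
    have hxy : pos (x n) < pos (y n) := ih (Nat.le_of_succ_le hi)
    by_contra h
    push_neg at h
    have hne : pos (x (n + 1)) ≠ pos (y (n + 1)) :=
      fun he => hdisj (n + 1) hi (n + 1) hi (hpos he)
    have hlt : pos (y (n + 1)) < pos (x (n + 1)) := lt_of_le_of_ne h (Ne.symm hne)
    have hq := hqvec n hn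
    by_cases hs : pos (x n) < pos (x (n + 1))
    · exact hnest (x n) (x (n + 1)) (y n) (y (n + 1)) (hxadj n hn) (hyadj n hn) hq
        ⟨hxy, (hsign n hn).mp hs, hlt⟩
    · have hxne : pos (x (n + 1)) ≠ pos (x n) :=
        fun he => (hxadj n hn).ne (hpos he).symm
      have hxlt : pos (x (n + 1)) < pos (x n) :=
        lt_of_le_of_ne (Nat.le_of_not_lt hs) hxne
      have hq' : q s(y (n + 1), y n) = q s(x (n + 1), x n) := by
        rw [Sym2.eq_swap, ← hq, Sym2.eq_swap]
      exact hnest (y (n + 1)) (y n) (x (n + 1)) (x n) (hyadj n hn).symm (hxadj n hn).symm hq'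
        ⟨hlt, hxlt, hxy⟩

theorem stmt2 {V : Type} (G : SimpleGraph V) (pos : V → ℕ)
    (hpos : Function.Injective pos)
    (q : Sym2 V → ℕ) (hnest : NoNestedPair G pos q)
    (ℓ : ℕ) (x y : ℕ → V)
    (hxadj : ∀ i ≤ ℓ, G.Adj (x i) (x (i + 1)))
    (hyadj : ∀ i ≤ ℓ, G.Adj (y i) (y (i + 1)))
    (hvw : pos (x 0) < pos (x (ℓ + 1)))
    (hpq : pos (y 0) < pos (y (ℓ + 1)))
    (hdisj : ∀ i ≤ ℓ + 1, ∀ j ≤ ℓ + 1, x i ≠ y j)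
    (hsign : ∀ i ≤ ℓ, (pos (x i) < pos (x (i + 1)) ↔ pos (y i) < pos (y (i + 1))))
    (hqvec : ∀ i ≤ ℓ, q s(x i, x (i + 1)) = q s(y i, y (i + 1))) :
    ¬ (pos (x 0) < pos (y 0) ∧ pos (y (ℓ + 1)) < pos (x (ℓ + 1))) ∧
    ¬ (pos (y 0) < pos (x 0) ∧ pos (x (ℓ + 1)) < pos (y (ℓ + 1))) := by
  constructor
  · rintro ⟨h1, h2⟩
    exact absurd (key_step G pos hpos q hnest ℓ x y hxadj hyadj hdisj hsign hqvec h1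
      (ℓ + 1) le_rfl) (Nat.not_lt.mpr (le_of_lt h2))
  · rintro ⟨h1, h2⟩
    have hdisj' : ∀ i ≤ ℓ + 1, ∀ j ≤ ℓ + 1, y i ≠ x j :=
      fun i hi j hj => (hdisj j hj i hi).symm
    have hsign' : ∀ i ≤ ℓ, (pos (y i) < pos (y (i + 1)) ↔ pos (x i) < pos (x (i + 1))) :=
      fun i hi => (hsign i hi).symm
    have hqvec' : ∀ i ≤ ℓ, q s(y i, y (i + 1)) = q s(x i, x (i + 1)) :=
      fun i hi => (hqvec i hi).symm
    exact absurd (key_step G pos hpos q hnest ℓ y x hyadj hxadj hdisj' hsign' hqvec' h1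
      (ℓ + 1) le_rfl) (Nat.not_lt.mpr (le_of_lt h2))
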